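/- There exist matrices A₀, A₁, A₂ ∈ 𝔰𝔩(3,ℂ), with A₁ diagonal and A₀, A₂ lying in the span of the diagonal traceless matrices together with the Ad(diag(1,ε,ε²))-eigenspace of eigenvalue ε, such that the eight matrices A₀, A₁, A₂, A₀A₁+A₁A₀, A₂A₁+A₁A₂, A₀², A₂², A₁²+A₀A₂+A₂A₀ are linearly independent over ℂ. -/

import Mathlib

noncomputable def ε : ℂ := Complex.exp (2 * Real.pi * Complex.I / 3)

noncomputable def dmat : Matrix (Fin 3) (Fin 3) ℂ := Matrix.diagonal ![1, ε, ε ^ 2]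

def V (a : ℕ) : Set (Matrix (Fin 3) (Fin 3) ℂ) :=
  {X | X.trace = 0 ∧ dmat * X * dmat⁻¹ = ε ^ a • X}

lemma eps_pow_three : ε ^ 3 = 1 := by
  rw [ε, ← Complex.exp_nat_mul]
  have : (3 : ℕ) * (2 * (Real.pi : ℂ) * Complex.I / 3) = 2 * (Real.pi : ℂ) * Complex.I := by
    push_cast; ring
  rw [this, Complex.exp_two_pi_mul_I]

lemma dmat_eq : dmat = !![1,0,0;0,ε,0;0,0,ε^2] := by
  unfold dmat
  ext i j
  fin_cases i <;> fin_cases j <;> simp [Matrix.diagonal, Matrix.vecHead, Matrix.vecTail]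

lemma dmat_inv : dmat⁻¹ = !![1,0,0;0,ε^2,0;0,0,ε] := by
  apply Matrix.inv_eq_right_inv
  rw [dmat_eq]
  ext i j
  have h3 := eps_pow_three
  fin_cases i <;> fin_cases j <;>
    simp [Matrix.mul_apply, Fin.sum_univ_three, Matrix.one_apply, Matrix.vecHead, Matrix.vecTail] <;>
    linear_combination h3

set_option maxHeartbeats 2000000 in
theorem exists_independent_coefficients :
    ∃ A₀ A₁ A₂ : Matrix (Fin 3) (Fin 3) ℂ,
      A₁ ∈ V 0 ∧
      (∃ D E, D ∈ V 0 ∧ E ∈ V 1 ∧ A₀ = D + E) ∧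
      (∃ D E, D ∈ V 0 ∧ E ∈ V 1 ∧ A₂ = D + E) ∧
      LinearIndependent ℂ ![A₀, A₁, A₂, A₀ * A₁ + A₁ * A₀, A₂ * A₁ + A₁ * A₂,
        A₀ ^ 2, A₂ ^ 2, A₁ ^ 2 + A₀ * A₂ + A₂ * A₀] := by
  have h3 := eps_pow_three
  refine ⟨!![0,0,1;1,0,0;0,0,0], !![0,0,0;0,-1,0;0,0,1], !![1,0,0;0,0,0;0,1,-1], ?_, ?_, ?_, ?_⟩
  · constructor
    · simp [Matrix.trace_fin_three, Matrix.vecHead, Matrix.vecTail]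
    · rw [dmat_inv, dmat_eq]
      ext i j
      fin_cases i <;> fin_cases j <;>
        simp [Matrix.mul_apply, Fin.sum_univ_three, Matrix.vecHead, Matrix.vecTail] <;> first | linear_combination h3 | linear_combination ε * h3 | ring
  · refine ⟨0, !![0,0,1;1,0,0;0,0,0], ⟨by simp, by simp⟩, ⟨?_, ?_⟩, by simp⟩
    · simp [Matrix.trace_fin_three, Matrix.vecHead, Matrix.vecTail]
    · rw [dmat_inv, dmat_eq]
      ext i j
      fin_cases i <;> fin_cases j <;>
        simp [Matrix.mul_apply, Fin.sum_univ_three, Matrix.vecHead, Matrix.vecTail] <;> first | linear_combination h3 | linear_combination ε * h3 | ring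
  · refine ⟨!![1,0,0;0,0,0;0,0,-1], !![0,0,0;0,0,0;0,1,0], ⟨?_, ?_⟩, ⟨?_, ?_⟩, ?_⟩
    · simp [Matrix.trace_fin_three, Matrix.vecHead, Matrix.vecTail]
    · rw [dmat_inv, dmat_eq]
      ext i j
      fin_cases i <;> fin_cases j <;>
        simp [Matrix.mul_apply, Fin.sum_univ_three, Matrix.vecHead, Matrix.vecTail] <;> first | linear_combination h3 | linear_combination ε * h3 | ring
    · simp [Matrix.trace_fin_three, Matrix.vecHead, Matrix.vecTail]
    · rw [dmat_inv, dmat_eq]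
      ext i j
      fin_cases i <;> fin_cases j <;>
        simp [Matrix.mul_apply, Fin.sum_univ_three, Matrix.vecHead, Matrix.vecTail] <;> first | linear_combination h3 | linear_combination ε * h3 | ring
    · ext i j
      fin_cases i <;> fin_cases j <;> simp [Matrix.vecHead, Matrix.vecTail]
  · have p3 : !![(0:ℂ),0,1;1,0,0;0,0,0] * !![0,0,0;0,-1,0;0,0,1] +
        !![(0:ℂ),0,0;0,-1,0;0,0,1] * !![0,0,1;1,0,0;0,0,0] = !![0,0,1;-1,0,0;0,0,0] := by
      ext i j
      fin_cases i <;> fin_cases j <;>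
        simp [Matrix.mul_apply, Fin.sum_univ_three, Matrix.vecHead, Matrix.vecTail]
    have p4 : !![(1:ℂ),0,0;0,0,0;0,1,-1] * !![0,0,0;0,-1,0;0,0,1] +
        !![(0:ℂ),0,0;0,-1,0;0,0,1] * !![1,0,0;0,0,0;0,1,-1] = !![0,0,0;0,0,0;0,0,-2] := by
      ext i j
      fin_cases i <;> fin_cases j <;>
        simp [Matrix.mul_apply, Fin.sum_univ_three, Matrix.vecHead, Matrix.vecTail] <;> ring
    have p5 : !![(0:ℂ),0,1;1,0,0;0,0,0] ^ 2 = !![0,0,0;0,0,1;0,0,0] := by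
      ext i j
      fin_cases i <;> fin_cases j <;>
        simp [pow_two, Matrix.mul_apply, Fin.sum_univ_three, Matrix.vecHead, Matrix.vecTail]
    have p6 : !![(1:ℂ),0,0;0,0,0;0,1,-1] ^ 2 = !![1,0,0;0,0,0;0,-1,1] := by
      ext i j
      fin_cases i <;> fin_cases j <;>
        simp [pow_two, Matrix.mul_apply, Fin.sum_univ_three, Matrix.vecHead, Matrix.vecTail] <;> ring
    have p7 : !![(0:ℂ),0,0;0,-1,0;0,0,1] ^ 2 + !![(0:ℂ),0,1;1,0,0;0,0,0] * !![1,0,0;0,0,0;0,1,-1]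
        + !![(1:ℂ),0,0;0,0,0;0,1,-1] * !![0,0,1;1,0,0;0,0,0] = !![0,1,0;1,1,0;1,0,1] := by
      ext i j
      fin_cases i <;> fin_cases j <;>
        simp [pow_two, Matrix.mul_apply, Fin.sum_univ_three, Matrix.vecHead, Matrix.vecTail] <;> ring
    rw [p3, p4, p5, p6, p7, Fintype.linearIndependent_iff]
    intro g hg
    rw [← Matrix.ext_iff] at hg
    have e00 := hg 0 0; have e01 := hg 0 1; have e02 := hg 0 2
    have e10 := hg 1 0; have e11 := hg 1 1; have e12 := hg 1 2
    have e20 := hg 2 0; have e21 := hg 2 1; have e22 := hg 2 2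
    simp [Fin.sum_univ_succ, Matrix.cons_val_succ, Matrix.vecHead, Matrix.vecTail]
      at e00 e01 e02 e10 e11 e12 e20 e21 e22
    have h0 : g 0 = 0 := by linear_combination (e02 + e10 - e20) / 2
    have h1 : g 1 = 0 := by linear_combination e20 - e11
    have h2 : g 2 = 0 := by linear_combination (e00 + e21) / 2
    have h3' : g 3 = 0 := by linear_combination (e02 - e10 + e20) / 2
    have h5' : g (Fin.succ 2).succ.succ = 0 := e12
    have h6' : g 6 = 0 := by linear_combination (e00 - e21) / 2
    have h7' : g 7 = 0 := e20
    have h4' : g 4 = 0 := by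
      linear_combination (h1 - h2 + h6' + h7' - e22) / 2
    intro i
    fin_cases i
    · exact h0
    · exact h1
    · exact h2
    · exact h3'
    · exact h4'
    · exact h5'
    · exact h6'
    · exact h7'
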